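/- Let Γ be a countable discrete group and let Hₙ, H ≤ Γ be subgroups with Hₙ → H in the Chabauty topology. Then for every x ∈ L(H) there exists a sequence (xₙ) with xₙ ∈ L(Hₙ) for all n, ‖xₙ‖ ≤ ‖x‖ for all n, and xₙ → x in the strong-* operator topology (i.e. xₙξ → xξ and xₙ*ξ → x*ξ for every ξ ∈ ℓ²(Γ)). -/

import Mathlib

open scoped InnerProductSpace ComplexOrder ENNReal Classical
open ContinuousLinearMap Filter

set_option linter.unusedSectionVars false
set_option maxHeartbeats 1000000

noncomputable section

/-- A group `G` is amenable if there is a left-translation-invariant state (invariant mean)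
on the algebra `ℓ^∞(G)` of bounded complex functions on `G`. -/
def HasInvariantMean (G : Type*) [Group G] : Prop :=
  ∃ m : lp (fun _ : G => ℂ) ∞ →ₗ[ℂ] ℂ,
    m 1 = 1 ∧
    (∀ f : lp (fun _ : G => ℂ) ∞, 0 ≤ m (star f * f)) ∧
    ∀ (g : G) (f₁ f₂ : lp (fun _ : G => ℂ) ∞), (∀ x : G, f₂ x = f₁ (g * x)) → m f₂ = m f₁

variable {Γ : Type*} [Group Γ] [Countable Γ]
variable {H : Type*} [NormedAddCommGroup H] [InnerProductSpace ℂ H] [CompleteSpace H]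

/-- A state on `B(H)`: a positive linear functional taking the value `1` at the unit. -/
def IsStateB (φ : (H →L[ℂ] H) →ₗ[ℂ] ℂ) : Prop :=
  φ 1 = 1 ∧ ∀ T : H →L[ℂ] H, 0 ≤ φ (adjoint T * T)

/-- The group von Neumann algebra `L(Γ)`: the double commutant of the range of the left
regular representation `lam`. -/
def groupVN (lam : Γ → H →L[ℂ] H) : Set (H →L[ℂ] H) :=
  Set.centralizer (Set.centralizer (Set.range lam))

/-- For a subgroup `K ≤ Γ`, the von Neumann subalgebra `L(K)` of `L(Γ)` generated by
`{lam h : h ∈ K}`, realized as the double commutant. -/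
def subgroupVN (lam : Γ → H →L[ℂ] H) (K : Subgroup Γ) : Set (H →L[ℂ] H) :=
  Set.centralizer (Set.centralizer (lam '' (K : Set Γ)))

/-- The canonical trace `τ₀(x) = ⟨x δ_e, δ_e⟩` on `L(Γ)`, where `δ_e = b 1`. -/
def tau0 (b : HilbertBasis Γ ℂ H) : (H →L[ℂ] H) → ℂ :=
  fun x => ⟪(b 1 : H), x (b 1)⟫_ℂ

/-- An `(M, τ₀)`-hypertrace: a state `φ` on `B(ℓ²(Γ))` with `φ|_{L(Γ)} = τ₀` and
`φ(mT) = φ(Tm)` for all `m ∈ M`, `T ∈ B(ℓ²(Γ))`. -/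
def IsHypertrace (b : HilbertBasis Γ ℂ H) (lam : Γ → H →L[ℂ] H)
    (M : Set (H →L[ℂ] H)) (φ : (H →L[ℂ] H) →ₗ[ℂ] ℂ) : Prop :=
  IsStateB φ ∧ (∀ x ∈ groupVN lam, φ x = tau0 b x) ∧
    ∀ m ∈ M, ∀ T : H →L[ℂ] H, φ (m * T) = φ (T * m)

namespace ChabautyAux

variable {Γ : Type*} [Group Γ]
variable {H : Type*} [NormedAddCommGroup H] [InnerProductSpace ℂ H] [CompleteSpace H]

theorem inner_basis (b : HilbertBasis Γ ℂ H) (s t : Γ) :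
    ⟪(b s : H), (b t : H)⟫_ℂ = if s = t then 1 else 0 :=
  orthonormal_iff_ite.mp b.orthonormal s t

theorem vec_ext (b : HilbertBasis Γ ℂ H) {v w : H}
    (h : ∀ g : Γ, ⟪(b g : H), v⟫_ℂ = ⟪(b g : H), w⟫_ℂ) : v = w := by
  apply b.repr.injective
  apply lp.ext
  funext g
  have h1 := b.repr_apply_apply v g
  have h2 := b.repr_apply_apply w g
  simp only [h1, h2, h g]

theorem op_ext (b : HilbertBasis Γ ℂ H) {A B : H →L[ℂ] H}
    (h : ∀ t : Γ, A (b t) = B (b t)) : A = B := by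
  apply ContinuousLinearMap.ext_on
    (Submodule.dense_iff_topologicalClosure_eq_top.mpr b.dense_span)
  rintro v ⟨t, rfl⟩
  exact h t

/-- The right-coset equivalence relation: `s ≈ t` iff `s * t⁻¹ ∈ J`. -/
def cosetSetoid (J : Subgroup Γ) : Setoid Γ where
  r s t := s * t⁻¹ ∈ J
  iseqv := by
    refine ⟨fun s => by simpa using J.one_mem, fun {s t} h => ?_, fun {s t u} h1 h2 => ?_⟩
    · have := J.inv_mem h; simpa [mul_inv_rev] using this
    · have := J.mul_mem h1 h2; simpa [mul_assoc] using this

def cls (J : Subgroup Γ) (g : Γ) : Quotient (cosetSetoid J) := Quotient.mk _ g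

theorem mk_eq_mk {J : Subgroup Γ} {g t : Γ} : cls J g = cls J t ↔ g * t⁻¹ ∈ J :=
  ⟨fun h => Quotient.exact h, fun h => Quotient.sound h⟩

/-- The closed subspace spanned by the basis vectors in a right coset. -/
def Vs (b : HilbertBasis Γ ℂ H) (J : Subgroup Γ) (q : Quotient (cosetSetoid J)) :
    Submodule ℂ H :=
  (Submodule.span ℂ (⇑b '' {g | cls J g = q})).topologicalClosure

instance (b : HilbertBasis Γ ℂ H) (J : Subgroup Γ) (q : Quotient (cosetSetoid J)) :
    CompleteSpace (Vs b J q) :=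
  (Submodule.isClosed_topologicalClosure _).completeSpace_coe

/-- The orthogonal projection onto `Vs b J q`, as an operator on `H`. -/
def P (b : HilbertBasis Γ ℂ H) (J : Subgroup Γ) (q : Quotient (cosetSetoid J)) :
    H →L[ℂ] H :=
  (Vs b J q).subtypeL.comp (Submodule.orthogonalProjection (Vs b J q))

theorem P_apply (b : HilbertBasis Γ ℂ H) (J : Subgroup Γ) (q : Quotient (cosetSetoid J))
    (v : H) : P b J q v = (Submodule.orthogonalProjection (Vs b J q) v : H) := rfl

theorem bmem_Vs (b : HilbertBasis Γ ℂ H) (J : Subgroup Γ) {q : Quotient (cosetSetoid J)}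
    {g : Γ} (hg : cls J g = q) : (b g : H) ∈ Vs b J q :=
  Submodule.le_topologicalClosure _ (Submodule.subset_span ⟨g, hg, rfl⟩)

theorem borth (b : HilbertBasis Γ ℂ H) (J : Subgroup Γ) {q : Quotient (cosetSetoid J)}
    {g : Γ} (hg : cls J g ≠ q) : (b g : H) ∈ (Vs b J q)ᗮ := by
  rw [Submodule.mem_orthogonal]
  intro u hu
  have hle : Vs b J q ≤ (ℂ ∙ (b g : H))ᗮ := by
    apply Submodule.topologicalClosure_minimal
    · rw [Submodule.span_le]
      rintro _ ⟨g', hg', rfl⟩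
      rw [SetLike.mem_coe, Submodule.mem_orthogonal]
      intro w hw
      rcases Submodule.mem_span_singleton.mp hw with ⟨a, rfl⟩
      rw [inner_smul_left, inner_basis]
      have hne : g ≠ g' := fun h => hg (h ▸ hg')
      simp [hne]
    · exact Submodule.isClosed_orthogonal _
  have h2 : ⟪(b g : H), u⟫_ℂ = 0 :=
    (Submodule.mem_orthogonal _ u).mp (hle hu) _ (Submodule.mem_span_singleton_self _)
  rw [← inner_conj_symm, h2, map_zero]

theorem P_apply_mem (b : HilbertBasis Γ ℂ H) (J : Subgroup Γ)
    {q : Quotient (cosetSetoid J)} {g : Γ} (hg : cls J g = q) : P b J q (b g) = b g := by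
  rw [P_apply]
  exact (Submodule.starProjection_eq_self_iff (K := Vs b J q)).mpr (bmem_Vs b J hg)

theorem P_apply_ne (b : HilbertBasis Γ ℂ H) (J : Subgroup Γ)
    {q : Quotient (cosetSetoid J)} {g : Γ} (hg : cls J g ≠ q) : P b J q (b g) = 0 := by
  rw [P_apply]
  rw [Submodule.orthogonalProjectionOnto_apply_of_mem_orthogonal (borth b J hg)]
  simp

theorem P_selfadj (b : HilbertBasis Γ ℂ H) (J : Subgroup Γ) (q : Quotient (cosetSetoid J))
    (u w : H) : ⟪P b J q u, w⟫_ℂ = ⟪u, P b J q w⟫_ℂ :=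
  Submodule.inner_starProjection_left_eq_right _ u w

theorem inner_P (b : HilbertBasis Γ ℂ H) (J : Subgroup Γ) (q : Quotient (cosetSetoid J))
    (s : Γ) (v : H) :
    ⟪(b s : H), P b J q v⟫_ℂ = if cls J s = q then ⟪(b s : H), v⟫_ℂ else 0 := by
  rw [← P_selfadj]
  by_cases hs : cls J s = q
  · rw [P_apply_mem b J hs, if_pos hs]
  · rw [P_apply_ne b J hs, if_neg hs]
    simp

theorem P_norm_le (b : HilbertBasis Γ ℂ H) (J : Subgroup Γ) (q : Quotient (cosetSetoid J))
    (v : H) : ‖P b J q v‖ ≤ ‖v‖ := by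
  rw [P_apply]
  calc ‖(Submodule.orthogonalProjection (Vs b J q) v : H)‖
      ≤ ‖Submodule.orthogonalProjection (Vs b J q)‖ * ‖v‖ := by
        simpa using (Submodule.orthogonalProjection (Vs b J q)).le_opNorm v
    _ ≤ 1 * ‖v‖ := by
        gcongr
        exact Submodule.orthogonalProjectionOnto_norm_le (K := Vs b J q)
    _ = ‖v‖ := one_mul _

theorem P_hasSum (b : HilbertBasis Γ ℂ H) (J : Subgroup Γ) (q : Quotient (cosetSetoid J))
    (v : H) :
    HasSum (fun g : Γ => (if cls J g = q then ⟪(b g : H), v⟫_ℂ else 0) • (b g : H))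
      (P b J q v) := by
  have h := b.hasSum_repr (P b J q v)
  have heq : (fun g : Γ => b.repr (P b J q v) g • (b g : H))
      = fun g : Γ => (if cls J g = q then ⟪(b g : H), v⟫_ℂ else 0) • (b g : H) := by
    funext g
    rw [b.repr_apply_apply, inner_P]
  rwa [heq] at h

theorem P_min (b : HilbertBasis Γ ℂ H) (J : Subgroup Γ) (q : Quotient (cosetSetoid J))
    (u : H) {w : H} (hw : w ∈ Vs b J q) : ‖P b J q u - u‖ ≤ ‖w - u‖ := by
  rw [norm_sub_rev, norm_sub_rev w, P_apply]
  calc ‖u - (Submodule.orthogonalProjection (Vs b J q) u : H)‖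
      = ⨅ x : Vs b J q, ‖u - x‖ := Submodule.starProjection_minimal u
    _ ≤ ‖u - (⟨w, hw⟩ : Vs b J q)‖ :=
        ciInf_le ⟨0, by rintro r ⟨y, rfl⟩; exact norm_nonneg _⟩ (⟨w, hw⟩ : Vs b J q)

theorem hOF (b : HilbertBasis Γ ℂ H) (J : Subgroup Γ) :
    OrthogonalFamily ℂ (fun q : Quotient (cosetSetoid J) => Vs b J q)
      (fun q => (Vs b J q).subtypeₗᵢ) := by
  intro i j hij v w
  have hle : Vs b J i ≤ (Vs b J j)ᗮ := by
    apply Submodule.topologicalClosure_minimal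
    · rw [Submodule.span_le]
      rintro _ ⟨g, hg, rfl⟩
      exact borth b J (by rw [hg]; exact hij)
    · exact Submodule.isClosed_orthogonal _
  exact Submodule.inner_left_of_mem_orthogonal w.2 (hle v.2)

theorem inner_self_P (b : HilbertBasis Γ ℂ H) (J : Subgroup Γ)
    (q : Quotient (cosetSetoid J)) (v : H) :
    ⟪v, P b J q v⟫_ℂ = ((‖P b J q v‖ : ℂ)) ^ 2 := by
  have h1 : v - P b J q v ∈ (Vs b J q)ᗮ := Submodule.sub_starProjection_mem_orthogonal v
  have h2 : P b J q v ∈ Vs b J q := by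
    rw [P_apply]; exact (Submodule.orthogonalProjection (Vs b J q) v).2
  have h0 : ⟪v - P b J q v, P b J q v⟫_ℂ = 0 :=
    Submodule.inner_left_of_mem_orthogonal h2 h1
  rw [inner_sub_left, sub_eq_zero] at h0
  rw [h0, inner_self_eq_norm_sq_to_K]
  norm_cast

theorem bessel (b : HilbertBasis Γ ℂ H) (J : Subgroup Γ) (v : H)
    (F : Finset (Quotient (cosetSetoid J))) :
    ∑ q ∈ F, ‖P b J q v‖ ^ 2 ≤ ‖v‖ ^ 2 := by
  classical
  set w := ∑ q ∈ F, P b J q v with hw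
  have hnorm : ‖w‖ ^ 2 = ∑ q ∈ F, ‖P b J q v‖ ^ 2 := by
    have h := (hOF b J).norm_sum (fun q => Submodule.orthogonalProjection (Vs b J q) v) F
    simpa [hw, P_apply] using h
  have hinner : ⟪v, w⟫_ℂ = ((∑ q ∈ F, ‖P b J q v‖ ^ 2 : ℝ) : ℂ) := by
    rw [hw, inner_sum]
    push_cast
    exact Finset.sum_congr rfl fun q _ => inner_self_P b J q v
  have hre : (∑ q ∈ F, ‖P b J q v‖ ^ 2) ≤ ‖v‖ * ‖w‖ := by
    have h1 : (∑ q ∈ F, ‖P b J q v‖ ^ 2) = (⟪v, w⟫_ℂ).re := by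
      rw [hinner]; exact (Complex.ofReal_re _).symm
    rw [h1]
    calc (⟪v, w⟫_ℂ).re ≤ ‖⟪v, w⟫_ℂ‖ := Complex.re_le_norm _
      _ ≤ ‖v‖ * ‖w‖ := norm_inner_le_norm _ _
  nlinarith [sq_nonneg (‖v‖ - ‖w‖), norm_nonneg w, norm_nonneg v, hnorm]

theorem summable_P_sq (b : HilbertBasis Γ ℂ H) (J : Subgroup Γ) (v : H) :
    Summable fun q : Quotient (cosetSetoid J) => ‖P b J q v‖ ^ 2 :=
  summable_of_sum_le (fun q => sq_nonneg _) (bessel b J v)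


theorem summable_A (b : HilbertBasis Γ ℂ H) (J : Subgroup Γ) (z : H →L[ℂ] H) (ξ : H) :
    Summable fun q : Quotient (cosetSetoid J) => P b J q (z (P b J q ξ)) := by
  have hsq : Summable fun q : Quotient (cosetSetoid J) =>
      ‖(Submodule.orthogonalProjection (Vs b J q) (z (P b J q ξ)) : Vs b J q)‖ ^ 2 := by
    apply Summable.of_nonneg_of_le (fun q => sq_nonneg _) _
      ((summable_P_sq b J ξ).mul_left (‖z‖ ^ 2))
    intro q
    have h1 : ‖(Submodule.orthogonalProjection (Vs b J q) (z (P b J q ξ)) : Vs b J q)‖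
        ≤ ‖z‖ * ‖P b J q ξ‖ := by
      calc ‖(Submodule.orthogonalProjection (Vs b J q) (z (P b J q ξ)) : Vs b J q)‖
          = ‖P b J q (z (P b J q ξ))‖ := rfl
        _ ≤ ‖z (P b J q ξ)‖ := P_norm_le b J q _
        _ ≤ ‖z‖ * ‖P b J q ξ‖ := z.le_opNorm _
    calc ‖(Submodule.orthogonalProjection (Vs b J q) (z (P b J q ξ)) : Vs b J q)‖ ^ 2
        ≤ (‖z‖ * ‖P b J q ξ‖) ^ 2 := by
          have hnn : (0:ℝ) ≤ ‖(Submodule.orthogonalProjection (Vs b J q) (z (P b J q ξ)) : Vs b J q)‖ :=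
            norm_nonneg _
          nlinarith
      _ = ‖z‖ ^ 2 * ‖P b J q ξ‖ ^ 2 := by ring
  exact ((hOF b J).summable_iff_norm_sq_summable
    (fun q => Submodule.orthogonalProjection (Vs b J q) (z (P b J q ξ)))).mpr hsq

theorem Ef_le (b : HilbertBasis Γ ℂ H) (J : Subgroup Γ) (z : H →L[ℂ] H) (ξ : H) :
    ‖∑' q : Quotient (cosetSetoid J), P b J q (z (P b J q ξ))‖ ≤ ‖z‖ * ‖ξ‖ := by
  have hs := (summable_A b J z ξ).hasSum
  have ht : Tendsto (fun F : Finset (Quotient (cosetSetoid J)) =>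
      ‖∑ q ∈ F, P b J q (z (P b J q ξ))‖) atTop
      (nhds ‖∑' q : Quotient (cosetSetoid J), P b J q (z (P b J q ξ))‖) :=
    (continuous_norm.tendsto _).comp hs
  refine le_of_tendsto ht (Filter.Eventually.of_forall fun F => ?_)
  have hnorm : ‖∑ q ∈ F, P b J q (z (P b J q ξ))‖ ^ 2
      = ∑ q ∈ F, ‖P b J q (z (P b J q ξ))‖ ^ 2 := by
    have h := (hOF b J).norm_sum
      (fun q => Submodule.orthogonalProjection (Vs b J q) (z (P b J q ξ))) F
    simpa [P_apply] using h
  have hle : ∑ q ∈ F, ‖P b J q (z (P b J q ξ))‖ ^ 2 ≤ ‖z‖ ^ 2 * ‖ξ‖ ^ 2 := by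
    calc ∑ q ∈ F, ‖P b J q (z (P b J q ξ))‖ ^ 2
        ≤ ∑ q ∈ F, ‖z‖ ^ 2 * ‖P b J q ξ‖ ^ 2 := by
          apply Finset.sum_le_sum
          intro q _
          have h1 : ‖P b J q (z (P b J q ξ))‖ ≤ ‖z‖ * ‖P b J q ξ‖ :=
            le_trans (P_norm_le b J q _) (z.le_opNorm _)
          nlinarith [norm_nonneg (P b J q (z (P b J q ξ)))]
      _ = ‖z‖ ^ 2 * ∑ q ∈ F, ‖P b J q ξ‖ ^ 2 := by rw [Finset.mul_sum]
      _ ≤ ‖z‖ ^ 2 * ‖ξ‖ ^ 2 := by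
          have := bessel b J ξ F
          nlinarith [sq_nonneg ‖z‖]
  have h2 : ‖∑ q ∈ F, P b J q (z (P b J q ξ))‖ ^ 2 ≤ (‖z‖ * ‖ξ‖) ^ 2 := by
    rw [hnorm]; nlinarith
  calc ‖∑ q ∈ F, P b J q (z (P b J q ξ))‖
      = Real.sqrt (‖∑ q ∈ F, P b J q (z (P b J q ξ))‖ ^ 2) :=
        (Real.sqrt_sq (norm_nonneg _)).symm
    _ ≤ Real.sqrt ((‖z‖ * ‖ξ‖) ^ 2) := Real.sqrt_le_sqrt h2
    _ = ‖z‖ * ‖ξ‖ := Real.sqrt_sq (by positivity)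

/-- The "conditional expectation" of `z` associated with the coset decomposition for `J`. -/
def Eop (b : HilbertBasis Γ ℂ H) (J : Subgroup Γ) (z : H →L[ℂ] H) : H →L[ℂ] H :=
  LinearMap.mkContinuous
    { toFun := fun ξ => ∑' q : Quotient (cosetSetoid J), P b J q (z (P b J q ξ))
      map_add' := fun ξ η => by
        rw [← Summable.tsum_add (summable_A b J z ξ) (summable_A b J z η)]
        exact tsum_congr fun q => by simp
      map_smul' := fun a ξ => by
        simp only [RingHom.id_apply]
        rw [← Summable.tsum_const_smul a (summable_A b J z ξ)]
        exact tsum_congr fun q => by simp }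
    ‖z‖ (fun ξ => Ef_le b J z ξ)

theorem Eop_apply (b : HilbertBasis Γ ℂ H) (J : Subgroup Γ) (z : H →L[ℂ] H) (ξ : H) :
    Eop b J z ξ = ∑' q : Quotient (cosetSetoid J), P b J q (z (P b J q ξ)) := rfl

theorem Eop_norm_le (b : HilbertBasis Γ ℂ H) (J : Subgroup Γ) (z : H →L[ℂ] H) :
    ‖Eop b J z‖ ≤ ‖z‖ :=
  LinearMap.mkContinuous_norm_le _ (norm_nonneg z) _

theorem Eop_apply_b (b : HilbertBasis Γ ℂ H) (J : Subgroup Γ) (z : H →L[ℂ] H) (t : Γ) :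
    Eop b J z (b t) = P b J (cls J t) (z (b t)) := by
  rw [Eop_apply]
  rw [tsum_eq_single (cls J t) ?h]
  · rw [P_apply_mem b J rfl]
  case h =>
    intro q hq
    rw [P_apply_ne b J (fun h => hq h.symm)]
    simp

theorem inner_Eop (b : HilbertBasis Γ ℂ H) (J : Subgroup Γ) (z : H →L[ℂ] H) (ξ : H)
    (s : Γ) :
    ⟪(b s : H), Eop b J z ξ⟫_ℂ = ⟪(b s : H), z (P b J (cls J s) ξ)⟫_ℂ := by
  have hs := (summable_A b J z ξ).hasSum.mapL (innerSL ℂ (b s : H))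
  have h1 : ⟪(b s : H), Eop b J z ξ⟫_ℂ
      = ∑' q : Quotient (cosetSetoid J), ⟪(b s : H), P b J q (z (P b J q ξ))⟫_ℂ := by
    rw [Eop_apply]
    exact (hs.tsum_eq).symm
  rw [h1]
  have heq : (fun q : Quotient (cosetSetoid J) => ⟪(b s : H), P b J q (z (P b J q ξ))⟫_ℂ)
      = fun q => if cls J s = q then ⟪(b s : H), z (P b J q ξ)⟫_ℂ else 0 := by
    funext q
    rw [inner_P]
  rw [heq, tsum_eq_single (cls J s) (fun q hq => if_neg (fun h => hq h.symm))]
  simp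

theorem inner_map_P (b : HilbertBasis Γ ℂ H) (J : Subgroup Γ) (S : H →L[ℂ] H)
    (q : Quotient (cosetSetoid J)) (v : H) (s : Γ) :
    ⟪(b s : H), S (P b J q v)⟫_ℂ
      = ∑' g : Γ, (if cls J g = q then ⟪(b g : H), v⟫_ℂ * ⟪(b s : H), S (b g)⟫_ℂ else 0) := by
  have h := (P_hasSum b J q v).mapL ((innerSL ℂ (b s : H)).comp S)
  have heq : (fun g : Γ => ((innerSL ℂ (b s : H)).comp S)
      ((if cls J g = q then ⟪(b g : H), v⟫_ℂ else 0) • (b g : H)))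
      = fun g : Γ =>
        (if cls J g = q then ⟪(b g : H), v⟫_ℂ * ⟪(b s : H), S (b g)⟫_ℂ else 0) := by
    funext g
    by_cases hg : cls J g = q <;> simp [hg]
  rw [heq] at h
  exact h.tsum_eq.symm


theorem adjoint_Eop (b : HilbertBasis Γ ℂ H) (J : Subgroup Γ) (z : H →L[ℂ] H) :
    ContinuousLinearMap.adjoint (Eop b J z) = Eop b J (ContinuousLinearMap.adjoint z) := by
  symm
  refine ((ContinuousLinearMap.eq_adjoint_iff _ _).mpr fun ξ η => ?_)
  -- ⟪Eop z† ξ, η⟫ = ⟪ξ, Eop z η⟫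
  have φcont : Continuous (fun v : H => ⟪v, η⟫_ℂ) :=
    continuous_id.inner continuous_const
  have φ : H →+ ℂ := AddMonoidHom.mk' (fun v => ⟪v, η⟫_ℂ) (fun a c => inner_add_left a c η)
  have hsum := (summable_A b J (ContinuousLinearMap.adjoint z) ξ).hasSum
  have h1 : ⟪Eop b J (ContinuousLinearMap.adjoint z) ξ, η⟫_ℂ
      = ∑' q : Quotient (cosetSetoid J),
          ⟪P b J q (ContinuousLinearMap.adjoint z (P b J q ξ)), η⟫_ℂ := by
    rw [Eop_apply]
    exact ((hsum.map (AddMonoidHom.mk' (fun v => ⟪v, η⟫_ℂ)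
      (fun a c => inner_add_left a c η)) φcont).tsum_eq).symm
  have h2 : ⟪ξ, Eop b J z η⟫_ℂ
      = ∑' q : Quotient (cosetSetoid J), ⟪ξ, P b J q (z (P b J q η))⟫_ℂ := by
    rw [Eop_apply]
    exact (((summable_A b J z η).hasSum.mapL (innerSL ℂ ξ)).tsum_eq).symm
  rw [h1, h2]
  refine tsum_congr fun q => ?_
  rw [P_selfadj, ContinuousLinearMap.adjoint_inner_left, ← P_selfadj]

theorem Tmat (b : HilbertBasis Γ ℂ H) (lam : Γ → H →L[ℂ] H)
    (hlam : ∀ g t : Γ, lam g (b t) = b (g * t))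
    (hadj : ∀ g : Γ, ContinuousLinearMap.adjoint (lam g) = lam g⁻¹)
    {J : Subgroup Γ} {T : H →L[ℂ] H}
    (hT : T ∈ Set.centralizer (lam '' (J : Set Γ))) {k : Γ} (hk : k ∈ J) (s t : Γ) :
    ⟪(b s : H), T (b (k * t))⟫_ℂ = ⟪(b (k⁻¹ * s) : H), T (b t)⟫_ℂ := by
  have hcomm : lam k * T = T * lam k := hT (lam k) ⟨k, hk, rfl⟩
  have h1 : T (b (k * t)) = lam k (T (b t)) := by
    rw [← hlam k t]
    have h2 := congrArg (fun S : H →L[ℂ] H => S (b t)) hcomm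
    simpa only [ContinuousLinearMap.mul_apply] using h2.symm
  rw [h1]
  have h3 : ⟪(b s : H), lam k (T (b t))⟫_ℂ
      = ⟪(ContinuousLinearMap.adjoint (lam k)) (b s), T (b t)⟫_ℂ :=
    (ContinuousLinearMap.adjoint_inner_left (lam k) _ _).symm
  rw [h3, hadj, hlam]

theorem Eop_mem (b : HilbertBasis Γ ℂ H) (lam : Γ → H →L[ℂ] H)
    (hlam : ∀ g t : Γ, lam g (b t) = b (g * t))
    (hadj : ∀ g : Γ, ContinuousLinearMap.adjoint (lam g) = lam g⁻¹)
    (J : Subgroup Γ) (z : H →L[ℂ] H) (c : Γ → ℂ)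
    (hToe : ∀ s t : Γ, ⟪(b s : H), z (b t)⟫_ℂ = c (s * t⁻¹)) :
    Eop b J z ∈ Set.centralizer (Set.centralizer (lam '' (J : Set Γ))) := by
  rw [Set.mem_centralizer_iff]
  intro T hT
  apply op_ext b
  intro t
  apply vec_ext b
  intro s
  simp only [ContinuousLinearMap.mul_apply]
  have hLHS : ⟪(b s : H), T (Eop b J z (b t))⟫_ℂ
      = ∑' k : Γ, (if k ∈ J then c k * ⟪(b (k⁻¹ * s) : H), T (b t)⟫_ℂ else 0) := by
    rw [Eop_apply_b, inner_map_P b J T (cls J t) (z (b t)) s]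
    rw [← (Equiv.mulRight t).tsum_eq]
    refine tsum_congr fun k => ?_
    simp only [Equiv.coe_mulRight]
    by_cases hk : k ∈ J
    · have hcls : cls J (k * t) = cls J t := mk_eq_mk.mpr (by simpa using hk)
      simp only [hcls, hk, if_true]
      rw [hToe, Tmat b lam hlam hadj hT hk s t]
      congr 2
      group
    · have hcls : cls J (k * t) ≠ cls J t := fun h => hk (by simpa using mk_eq_mk.mp h)
      simp only [hcls, hk, if_false]
  have hRHS : ⟪(b s : H), Eop b J z (T (b t))⟫_ℂ
      = ∑' k : Γ, (if k ∈ J then c k * ⟪(b (k⁻¹ * s) : H), T (b t)⟫_ℂ else 0) := by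
    rw [inner_Eop]
    rw [show ⟪(b s : H), z (P b J (cls J s) (T (b t)))⟫_ℂ
        = ∑' g : Γ, (if cls J g = cls J s
            then ⟪(b g : H), T (b t)⟫_ℂ * ⟪(b s : H), z (b g)⟫_ℂ else 0)
      from inner_map_P b J z (cls J s) (T (b t)) s]
    rw [← (Equiv.mulRight s).tsum_eq]
    rw [← (Equiv.inv Γ).tsum_eq]
    refine tsum_congr fun k => ?_
    simp only [Equiv.coe_mulRight, Equiv.inv_apply]
    by_cases hk : k ∈ J
    · have hk' : k⁻¹ ∈ J := J.inv_mem hk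
      have hcls : cls J (k⁻¹ * s) = cls J s := mk_eq_mk.mpr (by simpa using hk')
      rw [if_pos hcls, if_pos hk]
      rw [hToe]
      have harg : s * (k⁻¹ * s)⁻¹ = k := by group
      rw [harg]
      ring
    · have hk' : k⁻¹ ∉ J := fun h => hk (by simpa using J.inv_mem h)
      have hcls : cls J (k⁻¹ * s) ≠ cls J s := fun h => hk' (by simpa using mk_eq_mk.mp h)
      rw [if_neg hcls, if_neg hk]
  rw [hLHS, hRHS]


/-- The Hilbert basis `t ↦ b (t * g)`. -/
def rbasis (b : HilbertBasis Γ ℂ H) (g : Γ) : HilbertBasis Γ ℂ H :=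
  HilbertBasis.mk (b.orthonormal.comp (Equiv.mulRight g) (Equiv.mulRight g).injective)
    (by
      have hr : Set.range (⇑b ∘ ⇑(Equiv.mulRight g)) = Set.range ⇑b := by
        rw [Set.range_comp, Equiv.range_eq_univ, Set.image_univ]
      rw [hr, b.dense_span])

theorem rbasis_coe (b : HilbertBasis Γ ℂ H) (g : Γ) (t : Γ) :
    rbasis b g t = b (t * g) := by
  have h := HilbertBasis.coe_mk
    (b.orthonormal.comp (Equiv.mulRight g) (Equiv.mulRight g).injective)
    (by
      have hr : Set.range (⇑b ∘ ⇑(Equiv.mulRight g)) = Set.range ⇑b := by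
        rw [Set.range_comp, Equiv.range_eq_univ, Set.image_univ]
      rw [hr, b.dense_span])
  calc rbasis b g t = (⇑b ∘ ⇑(Equiv.mulRight g)) t := congrFun h t
    _ = b (t * g) := rfl

/-- The right translation operator `b t ↦ b (t * g)`. -/
def rho (b : HilbertBasis Γ ℂ H) (g : Γ) : H →L[ℂ] H :=
  (b.repr.trans (rbasis b g).repr.symm).toLinearIsometry.toContinuousLinearMap

theorem rho_b (b : HilbertBasis Γ ℂ H) (g t : Γ) : rho b g (b t) = b (t * g) := by
  classical
  rw [← rbasis_coe b g t]
  show (b.repr.trans (rbasis b g).repr.symm) (b t) = rbasis b g t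
  rw [LinearIsometryEquiv.trans_apply, b.repr_self, (rbasis b g).repr_symm_single]

theorem rho_comm (b : HilbertBasis Γ ℂ H) (lam : Γ → H →L[ℂ] H)
    (hlam : ∀ g t : Γ, lam g (b t) = b (g * t)) (h g : Γ) :
    lam h * rho b g = rho b g * lam h := by
  apply op_ext b
  intro t
  simp only [ContinuousLinearMap.mul_apply, rho_b, hlam, mul_assoc]

theorem inner_rho (b : HilbertBasis Γ ℂ H) (t s : Γ) (w : H) :
    ⟪(b s : H), rho b t w⟫_ℂ = ⟪(b (s * t⁻¹) : H), w⟫_ℂ := by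
  have h := (b.hasSum_repr w).mapL ((innerSL ℂ (b s : H)).comp (rho b t))
  have heq : (fun u : Γ => ((innerSL ℂ (b s : H)).comp (rho b t)) (b.repr w u • (b u : H)))
      = fun u : Γ => (if u = s * t⁻¹ then ⟪(b u : H), w⟫_ℂ else 0) := by
    funext u
    have h1 : ((innerSL ℂ (b s : H)).comp (rho b t)) (b.repr w u • (b u : H))
        = b.repr w u * ⟪(b s : H), b (u * t)⟫_ℂ := by
      simp [rho_b]
    rw [h1, inner_basis, b.repr_apply_apply]
    by_cases hu : u = s * t⁻¹
    · subst hu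
      have : s = s * t⁻¹ * t := by group
      rw [if_pos rfl, if_pos this.symm.symm]
      · simp
    · have : s ≠ u * t := by
        intro hs
        exact hu (by rw [hs]; group)
      rw [if_neg this, if_neg hu]
      simp
  rw [heq] at h
  have h2 := h.tsum_eq
  rw [tsum_eq_single (s * t⁻¹) (fun u hu => if_neg hu)] at h2
  rw [if_pos rfl] at h2
  exact h2.symm


theorem Eop_tendsto_b (b : HilbertBasis Γ ℂ H) (K : ℕ → Subgroup Γ) (L : Subgroup Γ)
    (hconv : ∀ g : Γ, g ∈ L → ∀ᶠ n in atTop, g ∈ K n)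
    (z : H →L[ℂ] H) (c : Γ → ℂ)
    (hToe : ∀ s t : Γ, ⟪(b s : H), z (b t)⟫_ℂ = c (s * t⁻¹))
    (hsupp : ∀ g : Γ, g ∉ L → c g = 0) (t : Γ) :
    Tendsto (fun n => Eop b (K n) z (b t)) atTop (nhds (z (b t))) := by
  rw [Metric.tendsto_nhds]
  intro ε hε
  have hsum : HasSum (fun g : Γ => c g • (b (g * t) : H)) (z (b t)) := by
    have h0 := b.hasSum_repr (z (b t))
    have h1 := (Equiv.mulRight t).hasSum_iff.mpr h0
    have heq : ((fun s : Γ => b.repr (z (b t)) s • (b s : H)) ∘ ⇑(Equiv.mulRight t))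
        = fun g : Γ => c g • (b (g * t) : H) := by
      funext g
      simp only [Function.comp_apply, Equiv.coe_mulRight]
      rw [b.repr_apply_apply, hToe, mul_inv_cancel_right]
    rwa [heq] at h1
  obtain ⟨F₀, hF₀⟩ := (Metric.tendsto_nhds.mp hsum ε hε).exists
  set F₁ := F₀.filter (fun g => c g ≠ 0) with hF₁def
  have hL : ∀ g ∈ F₁, g ∈ L := fun g hg => by
    by_contra hgL
    exact (Finset.mem_filter.mp hg).2 (hsupp g hgL)
  have hev : ∀ᶠ n in atTop, ∀ g ∈ F₁, g ∈ K n :=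
    (Filter.eventually_all_finset F₁).mpr fun g hg => hconv g (hL g hg)
  filter_upwards [hev] with n hn
  have hvmem : (∑ g ∈ F₁, c g • (b (g * t) : H)) ∈ Vs b (K n) (cls (K n) t) := by
    refine Submodule.sum_mem _ fun g hg => Submodule.smul_mem _ _ (bmem_Vs b _ ?_)
    exact mk_eq_mk.mpr (by simpa using hn g hg)
  have hvsum : (∑ g ∈ F₁, c g • (b (g * t) : H)) = ∑ g ∈ F₀, c g • (b (g * t) : H) := by
    rw [hF₁def]
    apply Finset.sum_filter_of_ne
    intro g _ hne
    intro hc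
    exact hne (by rw [hc, zero_smul])
  rw [dist_eq_norm, Eop_apply_b]
  calc ‖P b (K n) (cls (K n) t) (z (b t)) - z (b t)‖
      ≤ ‖(∑ g ∈ F₁, c g • (b (g * t) : H)) - z (b t)‖ := P_min b (K n) _ _ hvmem
    _ < ε := by
        rw [hvsum]
        simpa [dist_eq_norm] using hF₀

theorem tendsto_of_basis (b : HilbertBasis Γ ℂ H) (T : ℕ → H →L[ℂ] H) (A : H →L[ℂ] H)
    (C : ℝ) (hC : ∀ n, ‖T n‖ ≤ C)
    (hbt : ∀ t : Γ, Tendsto (fun n => T n (b t)) atTop (nhds (A (b t)))) (ξ : H) :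
    Tendsto (fun n => T n ξ) atTop (nhds (A ξ)) := by
  have hC0 : 0 ≤ C := le_trans (norm_nonneg (T 0)) (hC 0)
  have hspan : ∀ v ∈ Submodule.span ℂ (Set.range ⇑b),
      Tendsto (fun n => T n v) atTop (nhds (A v)) := by
    intro v hv
    induction hv using Submodule.span_induction with
    | mem v hv => obtain ⟨t, rfl⟩ := hv; exact hbt t
    | zero => simpa using tendsto_const_nhds
    | add v w _ _ hv hw =>
        have := hv.add hw
        simpa [map_add] using this
    | smul a v _ hv =>
        have := hv.const_smul a
        simpa [map_smul] using this
  rw [Metric.tendsto_nhds]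
  intro ε hε
  set D : ℝ := C + ‖A‖ + 1 with hD
  have hDpos : 0 < D := by positivity
  set δ : ℝ := ε / (2 * D) with hδ
  have hδpos : 0 < δ := by positivity
  have hdense : Dense (Submodule.span ℂ (Set.range ⇑b) : Set H) :=
    Submodule.dense_iff_topologicalClosure_eq_top.mpr b.dense_span
  obtain ⟨v, hvmem, hvdist⟩ := Metric.mem_closure_iff.mp (hdense ξ) δ hδpos
  have hvs : v ∈ Submodule.span ℂ (Set.range ⇑b) := hvmem
  filter_upwards [Metric.tendsto_nhds.mp (hspan v hvs) (ε / 2) (by positivity)] with n hn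
  have hξv : ‖ξ - v‖ < δ := by
    rw [← dist_eq_norm]
    exact hvdist
  have h1 : ‖T n ξ - T n v‖ ≤ C * δ := by
    rw [← map_sub]
    calc ‖T n (ξ - v)‖ ≤ ‖T n‖ * ‖ξ - v‖ := (T n).le_opNorm _
      _ ≤ C * δ := by
          apply mul_le_mul (hC n) hξv.le (norm_nonneg _) hC0
  have h2 : ‖A v - A ξ‖ ≤ ‖A‖ * δ := by
    rw [← map_sub]
    calc ‖A (v - ξ)‖ ≤ ‖A‖ * ‖v - ξ‖ := A.le_opNorm _
      _ ≤ ‖A‖ * δ := by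
          rw [norm_sub_rev]
          exact mul_le_mul_of_nonneg_left hξv.le (norm_nonneg _)
  have h3 : ‖T n v - A v‖ < ε / 2 := by
    rw [← dist_eq_norm]
    exact hn
  have htri : dist (T n ξ) (A ξ) ≤ ‖T n ξ - T n v‖ + ‖T n v - A v‖ + ‖A v - A ξ‖ := by
    rw [dist_eq_norm]
    calc ‖T n ξ - A ξ‖ = ‖(T n ξ - T n v) + ((T n v - A v) + (A v - A ξ))‖ := by abel_nf
      _ ≤ ‖T n ξ - T n v‖ + ‖(T n v - A v) + (A v - A ξ)‖ := norm_add_le _ _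
      _ ≤ ‖T n ξ - T n v‖ + (‖T n v - A v‖ + ‖A v - A ξ‖) := by
          gcongr
          exact norm_add_le _ _
      _ = _ := by ring
  have hCD : (C + ‖A‖) * δ < ε / 2 := by
    have h4 : (C + ‖A‖) * δ ≤ (D - 1) * δ := by
      apply mul_le_mul_of_nonneg_right _ hδpos.le
      rw [hD]; linarith
    have h5 : (D - 1) * δ < D * δ := by nlinarith
    have h6 : D * δ = ε / 2 := by
      rw [hδ]; field_simp
    linarith
  calc dist (T n ξ) (A ξ) ≤ ‖T n ξ - T n v‖ + ‖T n v - A v‖ + ‖A v - A ξ‖ := htri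
    _ < C * δ + ε / 2 + ‖A‖ * δ := by linarith
    _ = (C + ‖A‖) * δ + ε / 2 := by ring
    _ < ε / 2 + ε / 2 := by linarith
    _ = ε := by ring

end ChabautyAux

/-- If `Kₙ → K` in the Chabauty topology on subgroups of `Γ`, then every
`x ∈ L(K)` is the strong-* limit of a norm-bounded (by `‖x‖`) sequence `xₙ ∈ L(Kₙ)`. -/
theorem chabauty_convergence_gives_strong_star_approximation
    {Γ : Type*} [Group Γ] [Countable Γ]
    {H : Type*} [NormedAddCommGroup H] [InnerProductSpace ℂ H] [CompleteSpace H]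
    (b : HilbertBasis Γ ℂ H) (lam : Γ → H →L[ℂ] H)
    (hlam : ∀ g t : Γ, lam g (b t) = b (g * t))
    (hmul : ∀ g h : Γ, lam (g * h) = lam g * lam h)
    (hadj : ∀ g : Γ, adjoint (lam g) = lam g⁻¹)
    (K : ℕ → Subgroup Γ) (L : Subgroup Γ)
    (hconv : ∀ g : Γ, (g ∈ L → ∀ᶠ n in Filter.atTop, g ∈ K n) ∧
      (g ∉ L → ∀ᶠ n in Filter.atTop, g ∉ K n))
    (x : H →L[ℂ] H) (hx : x ∈ subgroupVN lam L) :
    ∃ xs : ℕ → H →L[ℂ] H,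
      (∀ n, xs n ∈ subgroupVN lam (K n)) ∧
      (∀ n, ‖xs n‖ ≤ ‖x‖) ∧
      (∀ ξ : H, Filter.Tendsto (fun n => xs n ξ) Filter.atTop (nhds (x ξ))) ∧
      (∀ ξ : H, Filter.Tendsto (fun n => adjoint (xs n) ξ) Filter.atTop (nhds (adjoint x ξ))) := by
  classical
  let c : Γ → ℂ := fun g => ⟪(b g : H), x (b 1)⟫_ℂ
  have hcdef : ∀ g : Γ, c g = ⟪(b g : H), x (b 1)⟫_ℂ := fun g => rfl
  have hxρ : ∀ g : Γ, ChabautyAux.rho b g * x = x * ChabautyAux.rho b g := by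
    intro g
    apply hx
    rintro _ ⟨h, _, rfl⟩
    exact ChabautyAux.rho_comm b lam hlam h g
  have hToe : ∀ s t : Γ, ⟪(b s : H), x (b t)⟫_ℂ = c (s * t⁻¹) := by
    intro s t
    have h2 : ChabautyAux.rho b t (b 1) = b t := by rw [ChabautyAux.rho_b, one_mul]
    have h3 := congrArg (fun S : H →L[ℂ] H => S (b 1)) (hxρ t)
    simp only [ContinuousLinearMap.mul_apply] at h3
    have h1 : x (b t) = ChabautyAux.rho b t (x (b 1)) := by
      conv_lhs => rw [← h2]
      exact h3.symm
    rw [h1, ChabautyAux.inner_rho, hcdef]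
  have hPLlam : ∀ m ∈ lam '' (L : Set Γ),
      m * ChabautyAux.P b L (ChabautyAux.cls L 1) = ChabautyAux.P b L (ChabautyAux.cls L 1) * m := by
    rintro _ ⟨h, hh, rfl⟩
    apply ChabautyAux.op_ext b
    intro t
    simp only [ContinuousLinearMap.mul_apply]
    by_cases ht : t ∈ L
    · have h1 : ChabautyAux.cls L t = ChabautyAux.cls L 1 :=
        ChabautyAux.mk_eq_mk.mpr (by simpa using ht)
      have h2 : ChabautyAux.cls L (h * t) = ChabautyAux.cls L 1 :=
        ChabautyAux.mk_eq_mk.mpr (by simpa using L.mul_mem hh ht)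
      rw [ChabautyAux.P_apply_mem b L h1, hlam, ChabautyAux.P_apply_mem b L h2]
    · have h1 : ChabautyAux.cls L t ≠ ChabautyAux.cls L 1 := fun hq =>
        ht (by simpa using ChabautyAux.mk_eq_mk.mp hq)
      have h2 : ChabautyAux.cls L (h * t) ≠ ChabautyAux.cls L 1 := by
        intro hq
        have hht : h * t ∈ L := by simpa using ChabautyAux.mk_eq_mk.mp hq
        have : t ∈ L := by
          have := L.mul_mem (L.inv_mem hh) hht
          simpa [mul_assoc] using this
        exact ht this
      rw [ChabautyAux.P_apply_ne b L h1, hlam, ChabautyAux.P_apply_ne b L h2, map_zero]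
  have hxPL := hx _ hPLlam
  have hsupp : ∀ g : Γ, g ∉ L → c g = 0 := by
    intro g hg
    have hb1 : ChabautyAux.P b L (ChabautyAux.cls L 1) (b 1) = b 1 :=
      ChabautyAux.P_apply_mem b L rfl
    have h3 := congrArg (fun S : H →L[ℂ] H => S (b 1)) hxPL
    simp only [ContinuousLinearMap.mul_apply] at h3
    have h1 : x (b 1) = ChabautyAux.P b L (ChabautyAux.cls L 1) (x (b 1)) := by
      conv_lhs => rw [← hb1]
      exact h3.symm
    rw [hcdef, h1, ChabautyAux.inner_P]
    have hne : ChabautyAux.cls L g ≠ ChabautyAux.cls L 1 := fun hq =>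
      hg (by simpa using ChabautyAux.mk_eq_mk.mp hq)
    rw [if_neg hne]
  refine ⟨fun n => ChabautyAux.Eop b (K n) x, ?_, ?_, ?_, ?_⟩
  · intro n
    exact ChabautyAux.Eop_mem b lam hlam hadj (K n) x c hToe
  · intro n
    exact ChabautyAux.Eop_norm_le b (K n) x
  · intro ξ
    exact ChabautyAux.tendsto_of_basis b _ x ‖x‖
      (fun n => ChabautyAux.Eop_norm_le b (K n) x)
      (fun t => ChabautyAux.Eop_tendsto_b b K L (fun g hg => (hconv g).1 hg) x c hToe hsupp t) ξ
  · intro ξ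
    have hrw : (fun n => adjoint (ChabautyAux.Eop b (K n) x) ξ)
        = fun n => ChabautyAux.Eop b (K n) (adjoint x) ξ := by
      funext n
      rw [ChabautyAux.adjoint_Eop]
    rw [hrw]
    let c' : Γ → ℂ := fun g => (starRingEnd ℂ) (c g⁻¹)
    have hToe' : ∀ s t : Γ, ⟪(b s : H), adjoint x (b t)⟫_ℂ = c' (s * t⁻¹) := by
      intro s t
      calc ⟪(b s : H), adjoint x (b t)⟫_ℂ = ⟪x (b s), (b t : H)⟫_ℂ :=
          ContinuousLinearMap.adjoint_inner_right x _ _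
        _ = (starRingEnd ℂ) ⟪(b t : H), x (b s)⟫_ℂ := (inner_conj_symm _ _).symm
        _ = (starRingEnd ℂ) (c (t * s⁻¹)) := by rw [hToe]
        _ = c' (s * t⁻¹) := by simp [c', mul_inv_rev]
    have hsupp' : ∀ g : Γ, g ∉ L → c' g = 0 := by
      intro g hg
      have hginv : g⁻¹ ∉ L := fun h => hg (by simpa using L.inv_mem h)
      show (starRingEnd ℂ) (c g⁻¹) = 0
      rw [hsupp _ hginv, map_zero]
    exact ChabautyAux.tendsto_of_basis b _ (adjoint x) ‖adjoint x‖
      (fun n => ChabautyAux.Eop_norm_le b (K n) (adjoint x))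
      (fun t => ChabautyAux.Eop_tendsto_b b K L (fun g hg => (hconv g).1 hg)
        (adjoint x) c' hToe' hsupp' t) ξ


end
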